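/- Let λ be a partition with ℓ(λ) < n and gcd(n, |λ|) = 1. Let g : SSYT_n(λ) → SSYT_n(λ) be a bijection with cont(g(T)) = c(cont(T)) for all T (c the cyclic shift), and suppose that for each i = 1, …, n−1 there exists a bijection t_i of SSYT_n(λ) with cont(t_i(T)) = s_i(cont(T)) for all T and t_i ∘ g^n = g^n ∘ t_i. Then g^n restricts to a bijection of SSYT_n(λ, α) for every α, and the order of g as a permutation of SSYT_n(λ) equals n · lcm{ order of g^n restricted to SSYT_n(λ, α) : α ∈ cont⁺(λ) }, where cont⁺(λ) is the set of weakly decreasing contents α (α_1 ≥ α_2 ≥ ⋯ ≥ α_n) with SSYT_n(λ, α) nonempty. -/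

import Mathlib

open Finset
open Fin.NatCast

/-- Semistandard Young tableaux of shape `μ` with entries in `{0, …, n-1}`
(the 0-indexed version of entries in `{1, …, n}`). -/
def SSYTn (μ : YoungDiagram) (n : ℕ) : Type :=
  {T : SemistandardYoungTableau μ // ∀ i j : ℕ, (i, j) ∈ μ → T i j < n}

noncomputable instance (μ : YoungDiagram) (n : ℕ) : Fintype (SSYTn μ n) := by
  apply Fintype.ofInjective
    (fun (T : SSYTn μ n) (c : μ.cells) =>
      (⟨T.1 c.1.1 c.1.2,
        Nat.lt_succ_of_lt (T.2 c.1.1 c.1.2 c.2)⟩ :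
        Fin (n + 1)))
  intro T T' h
  apply Subtype.ext
  apply SemistandardYoungTableau.ext
  intro i j
  by_cases hij : (i, j) ∈ μ
  · have := congrFun h ⟨(i, j), (YoungDiagram.mem_cells _).mpr hij⟩
    simpa using congrArg Fin.val this
  · rw [T.1.zeros hij, T'.1.zeros hij]

/-- The content of a tableau: `ssytContent μ n T k` is the number of entries of `T`
equal to `k` (0-indexed). -/
def ssytContent (μ : YoungDiagram) (n : ℕ) (T : SSYTn μ n) : Fin n → ℕ :=
  fun k => (μ.cells.filter (fun c => T.1 c.1 c.2 = (k : ℕ))).card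

/-- The cyclic shift `c(x_1,…,x_n) = (x_n, x_1, …, x_{n-1})` (0-indexed). -/
def cycShift {n : ℕ} {α : Type*} (x : Fin n → α) : Fin n → α :=
  fun i => if _h : (i : ℕ) = 0 then x ⟨n - 1, by have := i.isLt; omega⟩
           else x ⟨(i : ℕ) - 1, by have := i.isLt; omega⟩

lemma cycShift_apply {n : ℕ} [NeZero n] {A : Type*} (x : Fin n → A) (i : Fin n) :
    cycShift x i = x (i - 1) := by
  have hn : 0 < n := i.pos
  have hval : (i - 1).val = (n - 1 % n + (i : ℕ)) % n := by
    rw [Fin.sub_def]; simp [Fin.val_one']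
  have hsub : (i - 1).val = if (i : ℕ) = 0 then n - 1 else (i : ℕ) - 1 := by
    rw [hval]
    rcases eq_or_lt_of_le (show 1 ≤ n from hn) with h1 | h1
    · have hi : (i : ℕ) = 0 := by have := i.isLt; omega
      simp [← h1, hi, Nat.mod_one]
    · have h1n : 1 % n = 1 := Nat.mod_eq_of_lt h1
      rw [h1n]
      split_ifs with h
      · rw [h, add_zero, Nat.mod_eq_of_lt (by omega)]
      · have hv : 1 ≤ (i : ℕ) := Nat.one_le_iff_ne_zero.mpr h
        have he : n - 1 + (i : ℕ) = n + ((i : ℕ) - 1) := by omega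
        rw [he, Nat.add_mod_left, Nat.mod_eq_of_lt (by have := i.isLt; omega)]
  unfold cycShift
  split_ifs with h
  · congr 1; exact (Fin.ext (by rw [hsub, if_pos h])).symm
  · congr 1; exact (Fin.ext (by rw [hsub, if_neg h])).symm

lemma cycShift_iterate {n : ℕ} [NeZero n] (x : Fin n → ℕ) (k : ℕ) (i : Fin n) :
    cycShift^[k] x i = x (i - (k : Fin n)) := by
  induction k generalizing i with
  | zero => simp
  | succ k ih =>
      rw [Function.iterate_succ_apply', cycShift_apply, ih]
      congr 1
      rw [Nat.cast_succ]
      abel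

lemma cycShift_iterate_n {n : ℕ} [NeZero n] (x : Fin n → ℕ) : cycShift^[n] x = x :=
  funext fun i => by rw [cycShift_iterate, Fin.natCast_self, sub_zero]

lemma cycShift_dvd_aux (n : ℕ) [NeZero n] (C : ℕ) (hgcd : Nat.Coprime n C) (m : ℕ)
    (x : Fin n → ℕ) (hsumx : ∑ k : Fin n, x k = C) (hfx : cycShift^[m] x = x) : n ∣ m := by
  have hn : 0 < n := Nat.pos_of_ne_zero (NeZero.ne n)
  have h1 : ∀ i : Fin n, x (i - (m : Fin n)) = x i := by
    intro i
    conv_rhs => rw [← hfx]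
    rw [cycShift_iterate]
  have h2 : ∀ i : Fin n, x (i + (m : Fin n)) = x i := by
    intro i
    have := h1 (i + (m : Fin n))
    rw [add_sub_cancel_right] at this
    exact this.symm
  set β : ℕ → ℕ := fun j => x ((j : ℕ) : Fin n) with hβ
  have per_n : ∀ j, β (j + n) = β j := by
    intro j
    show x (((j + n : ℕ) : Fin n)) = x ((j : ℕ) : Fin n)
    congr 1
    push_cast [Fin.natCast_self]
    simp
  have per_m : ∀ j, β (j + m) = β j := by
    intro j
    show x (((j + m : ℕ) : Fin n)) = x ((j : ℕ) : Fin n)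
    push_cast
    exact h2 _
  have per_mul : ∀ a, (∀ j, β (j + a) = β j) → ∀ (k j : ℕ), β (j + k * a) = β j := by
    intro a pa k
    induction k with
    | zero => simp
    | succ k ih =>
        intro j
        have : j + (k + 1) * a = j + k * a + a := by ring
        rw [this, pa, ih]
  have per_gcd : ∀ a, ∀ b, (∀ j, β (j + a) = β j) → (∀ j, β (j + b) = β j) →
      ∀ j, β (j + Nat.gcd a b) = β j := by
    intro a
    induction a using Nat.strong_induction_on with
    | _ a ih =>
      intro b pa pb j
      rcases Nat.eq_zero_or_pos a with h0 | hpos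
      · subst h0; simpa [Nat.gcd_zero_left] using pb j
      · rw [Nat.gcd_rec]
        have pba : ∀ j, β (j + b % a) = β j := by
          intro j
          have e1 : β (j + b % a + b / a * a) = β (j + b % a) := per_mul a pa (b / a) _
          have e2 : j + b % a + b / a * a = j + b := by
            rw [add_assoc, Nat.mod_add_div']
          rw [e2] at e1
          rw [← e1, pb]
        exact ih (b % a) (Nat.mod_lt _ hpos) a pba pa j
  set d := Nat.gcd m n with hd
  have per_d : ∀ j, β (j + d) = β j := per_gcd m n per_m per_n
  have hdn : d ∣ n := Nat.gcd_dvd_right m n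
  have hβsum : ∑ j ∈ Finset.range n, β j = C := by
    rw [← hsumx]
    rw [← Fin.sum_univ_eq_sum_range β n]
    apply Finset.sum_congr rfl
    intro i _
    show x _ = x i
    rw [Fin.cast_val_eq_self]
  have hblocks : ∀ k : ℕ, ∑ j ∈ Finset.range (k * d), β j = k * ∑ j ∈ Finset.range d, β j := by
    intro k
    induction k with
    | zero => simp
    | succ k ih =>
        have hle : k * d ≤ (k + 1) * d := by nlinarith
        have := Finset.sum_Ico_consecutive β (Nat.zero_le (k * d)) hle
        rw [Finset.range_eq_Ico, ← this, ← Finset.range_eq_Ico, ih,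
          Finset.sum_Ico_eq_sum_range]
        have hsub : (k + 1) * d - k * d = d := by ring_nf; omega
        rw [hsub]
        have : ∀ j ∈ Finset.range d, β (k * d + j) = β j := by
          intro j _
          have : k * d + j = j + k * d := by ring
          rw [this, per_mul d per_d k j]
        rw [Finset.sum_congr rfl this]
        ring
  have hC2 : (n / d) * ∑ j ∈ Finset.range d, β j = C := by
    rw [← hblocks, Nat.div_mul_cancel hdn, hβsum]
  have hdvd1 : (n / d) ∣ C := Dvd.intro _ hC2
  have hdvd2 : (n / d) ∣ n := ⟨d, (Nat.div_mul_cancel hdn).symm⟩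
  have : (n / d) ∣ 1 := hgcd ▸ Nat.dvd_gcd hdvd2 hdvd1
  have hnd : n / d = 1 := Nat.dvd_one.mp this
  have hnd2 : n = d := by
    have := Nat.div_mul_cancel hdn
    rw [hnd, one_mul] at this
    omega
  rw [hd] at hnd2
  exact hnd2 ▸ Nat.gcd_dvd_left m n

theorem Equiv.Perm.apply_inv_self {A : Type*} (f : Equiv.Perm A) (x : A) :
    f (f⁻¹ x) = x :=
  Equiv.apply_symm_apply f x

theorem stmt14 (n : ℕ) (μ : YoungDiagram) (hlen : μ.colLen 0 < n)
    (hgcd : Nat.Coprime n μ.card)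
    (g : Equiv.Perm (SSYTn μ n))
    (hg : ∀ T, ssytContent μ n (g T) = cycShift (ssytContent μ n T))
    (ht : ∀ (i : ℕ) (_ : 1 ≤ i) (_ : i ≤ n - 1), ∃ t : Equiv.Perm (SSYTn μ n),
        (∀ T, ssytContent μ n (t T)
          = ssytContent μ n T ∘ Equiv.swap (⟨i - 1, by omega⟩ : Fin n) ⟨i, by omega⟩) ∧
        t * g ^ n = g ^ n * t) :
    (∀ α : Fin n → ℕ,
        Set.BijOn (g ^ n) {T | ssytContent μ n T = α} {T | ssytContent μ n T = α}) ∧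
    orderOf g = n * Finset.lcm
        (((Finset.univ : Finset (SSYTn μ n)).image (ssytContent μ n)).filter
          (fun α => ∀ j k : Fin n, j ≤ k → α k ≤ α j))
        (fun α => sInf {m : ℕ | 0 < m ∧ ∀ T, ssytContent μ n T = α → ((g ^ n) ^ m) T = T}) := by
  have hn : 0 < n := lt_of_le_of_lt (Nat.zero_le _) hlen
  haveI : NeZero n := ⟨hn.ne'⟩
  set S : (Fin n → ℕ) → Set ℕ :=
    fun α => {m : ℕ | 0 < m ∧ ∀ T, ssytContent μ n T = α → ((g ^ n) ^ m) T = T} with hS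
  -- content of iterates
  have hgk : ∀ (k : ℕ) (T : SSYTn μ n),
      ssytContent μ n ((g ^ k) T) = cycShift^[k] (ssytContent μ n T) := by
    intro k
    induction k with
    | zero => intro T; simp
    | succ k ih =>
        intro T
        rw [pow_succ', Equiv.Perm.mul_apply, hg, ih, Function.iterate_succ_apply']
  have hhk : ∀ T, ssytContent μ n ((g ^ n) T) = ssytContent μ n T := fun T => by
    rw [hgk n T, cycShift_iterate_n]
  have hcontfix : ∀ (j : ℕ) (T : SSYTn μ n),
      ssytContent μ n (((g ^ n) ^ j) T) = ssytContent μ n T := by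
    intro j
    induction j with
    | zero => intro T; simp
    | succ j ih =>
        intro T
        rw [pow_succ, Equiv.Perm.mul_apply, ih, hhk]
  -- Part 1
  have part1 : ∀ α : Fin n → ℕ,
      Set.BijOn (g ^ n) {T | ssytContent μ n T = α} {T | ssytContent μ n T = α} := by
    intro α
    refine ⟨fun T hT => ?_, fun T _ S' _ hTS => (g ^ n).injective hTS, fun T hT => ?_⟩
    · show ssytContent μ n ((g ^ n) T) = α
      rw [hhk]; exact hT
    · refine ⟨(g ^ n)⁻¹ T, ?_, Equiv.Perm.apply_inv_self _ _⟩
      show ssytContent μ n ((g ^ n)⁻¹ T) = α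
      have := hhk ((g ^ n)⁻¹ T)
      rw [Equiv.Perm.apply_inv_self] at this
      rw [← this]; exact hT
  -- sum of contents
  have hsum : ∀ T : SSYTn μ n, ∑ k : Fin n, ssytContent μ n T k = μ.card := by
    intro T
    have h := Finset.card_eq_sum_card_fiberwise
      (f := fun c : ℕ × ℕ => (⟨T.1 c.1 c.2 % n, Nat.mod_lt _ hn⟩ : Fin n))
      (s := μ.cells) (t := Finset.univ) (fun x _ => Finset.mem_univ _)
    rw [YoungDiagram.card, h]
    apply Finset.sum_congr rfl
    intro k _
    unfold ssytContent
    congr 1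
    apply Finset.filter_congr
    intro c hc
    have hlt : T.1 c.1 c.2 < n := T.2 c.1 c.2 ((YoungDiagram.mem_cells _).mp hc)
    constructor
    · intro h'
      apply Fin.ext
      simpa [Nat.mod_eq_of_lt hlt] using h'
    · intro h'
      have := congrArg Fin.val h'
      simpa [Nat.mod_eq_of_lt hlt] using this
  -- existence of a tableau
  have hne : Nonempty (SSYTn μ n) := by
    refine ⟨⟨⟨fun i j => if (i, j) ∈ μ.cells then i else 0, ?_, ?_, ?_⟩, ?_⟩⟩
    · intro i j1 j2 hj hm
      have h1 : (i, j1) ∈ μ := μ.up_left_mem le_rfl (le_of_lt hj) hm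
      simp [(YoungDiagram.mem_cells _).mpr hm, (YoungDiagram.mem_cells _).mpr h1]
    · intro i1 i2 j hi hm
      have h1 : (i1, j) ∈ μ := μ.up_left_mem (le_of_lt hi) le_rfl hm
      simp only [(YoungDiagram.mem_cells _).mpr hm, (YoungDiagram.mem_cells _).mpr h1, if_true,
        if_pos]
      exact hi
    · intro i j hm
      simp only [if_neg (fun hc => hm ((YoungDiagram.mem_cells (i, j)).mp hc))]
    · intro i j hm
      show (if (i, j) ∈ μ.cells then i else 0) < n
      rw [if_pos ((YoungDiagram.mem_cells _).mpr hm)]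
      calc i < μ.colLen j := YoungDiagram.mem_iff_lt_colLen.mp hm
      _ ≤ μ.colLen 0 := μ.colLen_anti 0 j (Nat.zero_le _)
      _ < n := hlen
  -- order bookkeeping
  have hM : 0 < orderOf (g ^ n) := orderOf_pos _
  have hMem : ∀ α : Fin n → ℕ, orderOf (g ^ n) ∈ S α := by
    intro α
    refine ⟨hM, fun T _ => ?_⟩
    rw [pow_orderOf_eq_one]
    simp
  have hfixmul : ∀ (m : ℕ) (α : Fin n → ℕ),
      (∀ T, ssytContent μ n T = α → ((g ^ n) ^ m) T = T) →
      ∀ (k : ℕ) (T : SSYTn μ n), ssytContent μ n T = α → ((g ^ n) ^ (m * k)) T = T := by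
    intro m α hm k
    induction k with
    | zero => intro T _; simp
    | succ k ih =>
        intro T hT
        have h1 : ((g ^ n) ^ (m * k + m)) T = ((g ^ n) ^ (m * k)) (((g ^ n) ^ m) T) := by
          rw [pow_add, Equiv.Perm.mul_apply]
        rw [Nat.mul_succ, h1, hm T hT, ih T hT]
  have hdvd_of_mem : ∀ (α : Fin n → ℕ) (m : ℕ), m ∈ S α → sInf (S α) ∣ m := by
    intro α m hm
    have hne' : (S α).Nonempty := ⟨m, hm⟩
    have ho := Nat.sInf_mem hne'
    have hd0 : 0 < sInf (S α) := ho.1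
    have hr : ∀ T, ssytContent μ n T = α → ((g ^ n) ^ (m % sInf (S α))) T = T := by
      intro T hT
      have h1 : ((g ^ n) ^ m) T = T := hm.2 T hT
      have hcr : ssytContent μ n (((g ^ n) ^ (m % sInf (S α))) T) = α := by
        rw [hcontfix]; exact hT
      have h2 := hfixmul (sInf (S α)) α ho.2 (m / sInf (S α)) _ hcr
      have hm_eq : m = sInf (S α) * (m / sInf (S α)) + m % sInf (S α) :=
        (Nat.div_add_mod m (sInf (S α))).symm
      rw [hm_eq, pow_add, Equiv.Perm.mul_apply, h2] at h1
      exact h1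
    rcases Nat.eq_zero_or_pos (m % sInf (S α)) with h0 | hpos
    · exact Nat.dvd_of_mod_eq_zero h0
    · exfalso
      have hmem' : m % sInf (S α) ∈ S α := ⟨hpos, hr⟩
      have := Nat.sInf_le hmem'
      have hlt := Nat.mod_lt m hd0
      omega
  -- swap steps
  have hstep : ∀ (p : ℕ) (hp : p + 1 < n),
      ∃ t : Equiv.Perm (SSYTn μ n),
        (∀ T, ssytContent μ n (t T) = ssytContent μ n T ∘
            Equiv.swap (⟨p, by omega⟩ : Fin n) ⟨p + 1, hp⟩) ∧ t * g ^ n = g ^ n * t := by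
    intro p hp
    obtain ⟨t, ht1, ht2⟩ := ht (p + 1) (by omega) (by omega)
    refine ⟨t, ?_, ht2⟩
    intro T
    have he : (⟨p + 1 - 1, by omega⟩ : Fin n) = ⟨p, by omega⟩ := Fin.ext (by simp)
    rw [ht1 T, he]
  have honedir : ∀ (p : ℕ) (hp : p + 1 < n) (α : Fin n → ℕ) (m : ℕ),
      m ∈ S α → m ∈ S (α ∘ Equiv.swap (⟨p, by omega⟩ : Fin n) ⟨p + 1, hp⟩) := by
    intro p hp α m hm
    obtain ⟨t, ht1, ht2⟩ := hstep p hp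
    refine ⟨hm.1, fun T hT => ?_⟩
    have hc : ssytContent μ n (t⁻¹ T) = α := by
      have h1 := ht1 (t⁻¹ T)
      rw [Equiv.Perm.apply_inv_self] at h1
      funext i
      have e1 := congrFun h1 (Equiv.swap (⟨p, by omega⟩ : Fin n) ⟨p + 1, hp⟩ i)
      rw [Function.comp_apply, Equiv.swap_apply_self] at e1
      have e2 := congrFun hT (Equiv.swap (⟨p, by omega⟩ : Fin n) ⟨p + 1, hp⟩ i)
      rw [Function.comp_apply, Equiv.swap_apply_self] at e2
      rw [← e1, e2]
    have h3 : ((g ^ n) ^ m) (t⁻¹ T) = t⁻¹ T := hm.2 _ hc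
    have hcomm : t * (g ^ n) ^ m = (g ^ n) ^ m * t := Commute.pow_right ht2 m
    calc ((g ^ n) ^ m) T = ((g ^ n) ^ m) (t (t⁻¹ T)) := by rw [Equiv.Perm.apply_inv_self]
      _ = (((g ^ n) ^ m) * t) (t⁻¹ T) := rfl
      _ = (t * ((g ^ n) ^ m)) (t⁻¹ T) := by rw [hcomm]
      _ = t (((g ^ n) ^ m) (t⁻¹ T)) := rfl
      _ = t (t⁻¹ T) := by rw [h3]
      _ = T := Equiv.Perm.apply_inv_self t T
  have hswap_self : ∀ (p : ℕ) (hp : p + 1 < n) (α : Fin n → ℕ),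
      (α ∘ Equiv.swap (⟨p, by omega⟩ : Fin n) ⟨p + 1, hp⟩)
        ∘ Equiv.swap (⟨p, by omega⟩ : Fin n) ⟨p + 1, hp⟩ = α :=
    fun p hp α => funext fun i => by simp [Equiv.swap_apply_self]
  have hSeq : ∀ (p : ℕ) (hp : p + 1 < n) (α : Fin n → ℕ),
      S α = S (α ∘ Equiv.swap (⟨p, by omega⟩ : Fin n) ⟨p + 1, hp⟩) := by
    intro p hp α
    apply Set.Subset.antisymm
    · intro m hm; exact honedir p hp α m hm
    · intro m hm
      have h2 := honedir p hp (α ∘ Equiv.swap (⟨p, by omega⟩ : Fin n) ⟨p + 1, hp⟩) m hm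
      rwa [hswap_self p hp α] at h2
  have harise : ∀ (p : ℕ) (hp : p + 1 < n) (α : Fin n → ℕ),
      (∃ T, ssytContent μ n T = α) →
      ∃ T, ssytContent μ n T = α ∘ Equiv.swap (⟨p, by omega⟩ : Fin n) ⟨p + 1, hp⟩ := by
    rintro p hp α ⟨T, hT⟩
    obtain ⟨t, ht1, -⟩ := hstep p hp
    exact ⟨t T, by rw [ht1 T, hT]⟩
  -- sorting
  have hsort : ∀ (w : ℕ) (α : Fin n → ℕ), (∑ k : Fin n, (k : ℕ) * α k) = w →
      (∃ T, ssytContent μ n T = α) →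
      ∃ β : Fin n → ℕ, (∃ T, ssytContent μ n T = β) ∧
        (∀ j k : Fin n, j ≤ k → β k ≤ β j) ∧ sInf (S β) = sInf (S α) := by
    intro w
    induction w using Nat.strong_induction_on with
    | _ w ih =>
      intro α hw har
      by_cases hdom : ∀ j k : Fin n, j ≤ k → α k ≤ α j
      · exact ⟨α, har, hdom, rfl⟩
      · have hasc : ∃ p : ℕ, ∃ hp : p + 1 < n, α ⟨p, by omega⟩ < α ⟨p + 1, hp⟩ := by
          by_contra hno
          push_neg at hno
          apply hdom
          have key : ∀ (d a : ℕ) (h : a + d < n), α ⟨a + d, h⟩ ≤ α ⟨a, by omega⟩ := by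
            intro d
            induction d with
            | zero => intro a h; exact le_of_eq (congrArg α (Fin.ext rfl))
            | succ d ihd =>
                intro a h
                have h1 : a + d + 1 < n := by omega
                have step := hno (a + d) h1
                calc α ⟨a + (d + 1), h⟩ = α ⟨a + d + 1, h1⟩ := congrArg α (Fin.ext rfl)
                _ ≤ α ⟨a + d, by omega⟩ := step
                _ ≤ α ⟨a, by omega⟩ := ihd a (by omega)
          intro j k hjk
          have hjk' : (j : ℕ) ≤ (k : ℕ) := hjk
          obtain ⟨d, hd⟩ : ∃ d, (k : ℕ) = (j : ℕ) + d := ⟨(k : ℕ) - (j : ℕ), by omega⟩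
          have hkn : (j : ℕ) + d < n := by rw [← hd]; exact k.isLt
          calc α k = α ⟨(j : ℕ) + d, hkn⟩ := congrArg α (Fin.ext hd)
          _ ≤ α ⟨(j : ℕ), by omega⟩ := key d (j : ℕ) hkn
          _ = α j := congrArg α (Fin.ext rfl)
        obtain ⟨p, hp, hpa⟩ := hasc
        set a : Fin n := ⟨p, by omega⟩ with ha
        set b : Fin n := ⟨p + 1, hp⟩ with hb
        have hab : a ≠ b := Fin.ne_of_val_ne (show p ≠ p + 1 by omega)
        set α' : Fin n → ℕ := α ∘ Equiv.swap a b with hα'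
        -- measure decrease
        have sum_eq : ∑ k : Fin n, (k : ℕ) * α' k
            = ∑ k : Fin n, ((Equiv.swap a b k : Fin n) : ℕ) * α k := by
          apply Fintype.sum_equiv (Equiv.swap a b)
          intro x
          simp [hα', Equiv.swap_apply_self]
        have split : ∀ γ : Fin n → ℕ, ∑ k : Fin n, γ k
            = γ a + (γ b + ∑ k ∈ (Finset.univ.erase a).erase b, γ k) := by
          intro γ
          rw [Finset.add_sum_erase _ γ (Finset.mem_erase.mpr ⟨fun hba => hab hba.symm,
            Finset.mem_univ b⟩), Finset.add_sum_erase _ γ (Finset.mem_univ a)]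
        have hrest : ∑ k ∈ (Finset.univ.erase a).erase b,
              ((Equiv.swap a b k : Fin n) : ℕ) * α k
            = ∑ k ∈ (Finset.univ.erase a).erase b, (k : ℕ) * α k := by
          apply Finset.sum_congr rfl
          intro k hk
          have hk1 := Finset.mem_erase.mp hk
          have hk2 := Finset.mem_erase.mp hk1.2
          rw [Equiv.swap_apply_of_ne_of_ne hk2.1 hk1.1]
        have hWlt : (∑ k : Fin n, (k : ℕ) * α' k) < w := by
          have e1 : ∑ k : Fin n, (k : ℕ) * α' k
              = ((b : ℕ) * α a + ((a : ℕ) * α b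
                + ∑ k ∈ (Finset.univ.erase a).erase b, (k : ℕ) * α k)) := by
            rw [sum_eq, split (fun k => ((Equiv.swap a b k : Fin n) : ℕ) * α k)]
            rw [Equiv.swap_apply_left, Equiv.swap_apply_right, hrest]
          have e2 : w = ((a : ℕ) * α a + ((b : ℕ) * α b
              + ∑ k ∈ (Finset.univ.erase a).erase b, (k : ℕ) * α k)) := by
            rw [← hw, split (fun k => (k : ℕ) * α k)]
          rw [e1, e2]
          have hva : (a : ℕ) = p := rfl
          have hvb : (b : ℕ) = p + 1 := rfl
          rw [hva, hvb]
          have hx1 : (p + 1) * α a = p * α a + α a := by ring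
          have hx2 : (p + 1) * α b = p * α b + α b := by ring
          rw [hx1, hx2]
          have := hpa
          omega
        obtain ⟨β, hβ1, hβ2, hβ3⟩ := ih _ hWlt α' rfl (harise p hp α har)
        refine ⟨β, hβ1, hβ2, ?_⟩
        rw [hβ3, hα', ← hSeq p hp α]
  -- assemble
  obtain ⟨T0⟩ := hne
  have hgN : g ^ orderOf g = 1 := pow_orderOf_eq_one g
  have hnN : n ∣ orderOf g := by
    apply cycShift_dvd_aux n μ.card hgcd (orderOf g) (ssytContent μ n T0) (hsum T0)
    have := hgk (orderOf g) T0
    rw [hgN] at this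
    rw [← this]
    simp
  set M := orderOf (g ^ n) with hMdef
  have hNM : orderOf g = n * M := by
    apply Nat.dvd_antisymm
    · apply orderOf_dvd_of_pow_eq_one
      rw [pow_mul]
      exact pow_orderOf_eq_one _
    · have h1 : M ∣ orderOf g / n := by
        apply orderOf_dvd_of_pow_eq_one
        rw [← pow_mul, Nat.mul_div_cancel' hnN, hgN]
      obtain ⟨c, hc⟩ := h1
      obtain ⟨e, he⟩ := hnN
      have he2 : orderOf g / n = e := by rw [he, Nat.mul_div_cancel_left e hn]
      rw [he2] at hc
      exact ⟨c, by rw [he, hc]; ring⟩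
  have hML : M = Finset.lcm
      (((Finset.univ : Finset (SSYTn μ n)).image (ssytContent μ n)).filter
        (fun α => ∀ j k : Fin n, j ≤ k → α k ≤ α j))
      (fun α => sInf (S α)) := by
    apply Nat.dvd_antisymm
    · apply orderOf_dvd_of_pow_eq_one
      apply Equiv.ext
      intro T
      obtain ⟨β, hβar, hβdom, hβo⟩ := hsort (∑ k : Fin n, (k : ℕ) * ssytContent μ n T k)
        (ssytContent μ n T) rfl ⟨T, rfl⟩
      obtain ⟨T', hT'⟩ := hβar
      have hβmem : β ∈ ((Finset.univ : Finset (SSYTn μ n)).image (ssytContent μ n)).filter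
          (fun α => ∀ j k : Fin n, j ≤ k → α k ≤ α j) :=
        Finset.mem_filter.mpr ⟨Finset.mem_image.mpr ⟨T', Finset.mem_univ _, hT'⟩, hβdom⟩
      have hdl : sInf (S β) ∣ Finset.lcm
          (((Finset.univ : Finset (SSYTn μ n)).image (ssytContent μ n)).filter
            (fun α => ∀ j k : Fin n, j ≤ k → α k ≤ α j))
          (fun α => sInf (S α)) := Finset.dvd_lcm hβmem
      rw [hβo] at hdl
      obtain ⟨c, hc⟩ := hdl
      have hmem0 : sInf (S (ssytContent μ n T)) ∈ S (ssytContent μ n T) :=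
        Nat.sInf_mem ⟨M, hMem _⟩
      have hfin := hfixmul _ (ssytContent μ n T) hmem0.2 c T rfl
      rw [← hc] at hfin
      simpa using hfin
    · apply Finset.lcm_dvd
      intro β _
      exact hdvd_of_mem β M (hMem β)
  refine ⟨part1, ?_⟩
  rw [hNM, hML]
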